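/- Let {(Zᵢ,Xᵢ)}_{i=1}^n be i.i.d. with joint pmf p_{ZX} on a product of finite alphabets 𝒵 × 𝒳, let ε, ε' > 0 and b₁ > b₀ > 0, suppose ℙ[ f(Xⁿ) > ε' or f(Zⁿ,Xⁿ) > ε' ] ≤ 2^{−n b₁ ε}, and let Θ ≜ 𝟙{ (Zⁿ,Xⁿ) ∈ 𝒜_{ε,ε'}^{(n)}(Z,X) and Zⁿ ∈ ℬ_{ε,ε'}^{(n)}(Z,X) }. Then ℙ[Θ = 1] ≥ 1 − ( e^{n C_Z^{(1)}(ε)} + e^{n C_Z^{(2)}(ε)} + 2^{−n b₁ ε} + 2^{−n (b₁ − b₀) ε} ). -/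

import Mathlib

open Finset Real
open scoped Classical BigOperators

/-- Shannon entropy (in bits) of a pmf on a finite alphabet, with the convention `0 log 0 = 0`. -/
noncomputable def shannonEntropy {W : Type*} [Fintype W] (q : W → ℝ) : ℝ :=
  - ∑ w, q w * Real.logb 2 (q w)

/-- Probability of an i.i.d. sequence: `p(wⁿ) = ∏ᵢ p(wᵢ)`. -/
noncomputable def seqProb {W : Type*} (q : W → ℝ) {n : ℕ} (w : Fin n → W) : ℝ :=
  ∏ i, q (w i)

/-- The deviation `f(wⁿ) = |−(1/n) log₂ p(wⁿ) − H(W)|` of the empirical entropy. -/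
noncomputable def fdev {W : Type*} [Fintype W] (q : W → ℝ) {n : ℕ} (w : Fin n → W) : ℝ :=
  |(-(1 / (n : ℝ))) * Real.logb 2 (seqProb q w) - shannonEntropy q|

/-- Chernoff exponent `C_W^{(1)}(ε) = inf_{s>0} ( ln 𝔼[q(W)^{−s/ln 2}] − s(H(W)+ε) )`. -/
noncomputable def chernoff1 {W : Type*} [Fintype W] (q : W → ℝ) (ε : ℝ) : ℝ :=
  sInf ((fun s : ℝ =>
    Real.log (∑ w ∈ Finset.univ.filter (fun w => 0 < q w), q w ^ (1 - s / Real.log 2))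
      - s * (shannonEntropy q + ε)) '' Set.Ioi 0)

/-- Chernoff exponent `C_W^{(2)}(ε) = inf_{s>0} ( ln 𝔼[q(W)^{s/ln 2}] − s(−H(W)+ε) )`. -/
noncomputable def chernoff2 {W : Type*} [Fintype W] (q : W → ℝ) (ε : ℝ) : ℝ :=
  sInf ((fun s : ℝ =>
    Real.log (∑ w ∈ Finset.univ.filter (fun w => 0 < q w), q w ^ (1 + s / Real.log 2))
      - s * (-shannonEntropy q + ε)) '' Set.Ioi 0)

/-- Marginal on the first component of a joint pmf. -/
noncomputable def margFst {X Y : Type*} [Fintype Y] (p : X × Y → ℝ) (x : X) : ℝ :=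
  ∑ y, p (x, y)

/-- Marginal on the second component of a joint pmf. -/
noncomputable def margSnd {X Y : Type*} [Fintype X] (p : X × Y → ℝ) (y : Y) : ℝ :=
  ∑ x, p (x, y)

/-- The sequence of pairs associated to a pair of sequences. -/
def pairSeq {X Y : Type*} {n : ℕ} (w : (Fin n → X) × (Fin n → Y)) : Fin n → X × Y :=
  fun i => (w.1 i, w.2 i)

/-- Joint probability `p(xⁿ,yⁿ) = ∏ᵢ p(xᵢ,yᵢ)` of a pair of i.i.d. sequences. -/
noncomputable def jointSeqProb {X Y : Type*} (p : X × Y → ℝ) {n : ℕ}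
    (w : (Fin n → X) × (Fin n → Y)) : ℝ :=
  ∏ i, p (w.1 i, w.2 i)

/-- The typical set `𝒜_{ε,ε'}^{(n)}(X,Y)`: `f(xⁿ) ≤ ε`, `f(yⁿ) ≤ ε'`, `f(xⁿ,yⁿ) ≤ ε'`. -/
def typical {X Y : Type*} [Fintype X] [Fintype Y] (p : X × Y → ℝ)
    (ε ε' : ℝ) {n : ℕ} (w : (Fin n → X) × (Fin n → Y)) : Prop :=
  fdev (margFst p) w.1 ≤ ε ∧ fdev (margSnd p) w.2 ≤ ε' ∧ fdev p (pairSeq w) ≤ ε'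

/-- Conditional probability `ℙ[ (Xⁿ,Yⁿ) ∉ 𝒜_{ε,ε'}^{(n)}(X,Y) | Xⁿ = xⁿ ]`
(for `xⁿ` with `p(xⁿ) > 0`). -/
noncomputable def condNotTyp {X Y : Type*} [Fintype X] [Fintype Y] (p : X × Y → ℝ)
    (ε ε' : ℝ) {n : ℕ} (xn : Fin n → X) : ℝ :=
  (∑ yn ∈ Finset.univ.filter (fun yn : Fin n → Y => ¬ typical p ε ε' (xn, yn)),
      jointSeqProb p (xn, yn)) / seqProb (margFst p) xn


section AuxLemmas

lemma aux_sum_prod {W : Type*} [Fintype W] (n : ℕ) (g : W → ℝ) :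
    ∑ zn : Fin n → W, ∏ i, g (zn i) = (∑ w, g w) ^ n := by
  rw [← Fin.prod_const n (∑ w, g w), Finset.prod_univ_sum]; simp

lemma seqProb_nonneg {W : Type*} [Fintype W] (q : W → ℝ) (hq : ∀ w, 0 ≤ q w) {n : ℕ}
    (zn : Fin n → W) : 0 ≤ seqProb q zn :=
  Finset.prod_nonneg fun i _ => hq (zn i)

lemma sum_seqProb {W : Type*} [Fintype W] (q : W → ℝ) (hq1 : ∑ w, q w = 1) (n : ℕ) :
    ∑ zn : Fin n → W, seqProb q zn = 1 := by
  unfold seqProb; rw [aux_sum_prod, hq1, one_pow]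

lemma sum_filter_split {ι : Type*} [Fintype ι] (c c1 c2 : ι → Prop) [DecidablePred c] [DecidablePred c1] [DecidablePred c2] (f : ι → ℝ)
    (hf : ∀ i, 0 ≤ f i) (h : ∀ i, c i → c1 i ∨ c2 i) :
    ∑ i ∈ Finset.univ.filter c, f i
      ≤ ∑ i ∈ Finset.univ.filter c1, f i + ∑ i ∈ Finset.univ.filter c2, f i := by
  classical
  rw [Finset.sum_filter, Finset.sum_filter, Finset.sum_filter, ← Finset.sum_add_distrib]
  apply Finset.sum_le_sum
  intro i _
  by_cases hc : c i
  · rcases h i hc with h1 | h2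
    · simp only [if_pos hc, if_pos h1]
      split <;> linarith [hf i]
    · simp only [if_pos hc, if_pos h2]
      split <;> linarith [hf i]
  · simp only [if_neg hc]
    split <;> split <;> linarith [hf i]

lemma tail1_core {W : Type*} [Fintype W] (q : W → ℝ) (hq : ∀ w, 0 ≤ q w)
    (hq1 : ∑ w, q w = 1) (n : ℕ) (hn : 0 < n) (ε : ℝ) (s : ℝ) (hs : 0 < s) :
    ∑ zn ∈ Finset.univ.filter
        (fun zn : Fin n → W => ε < (-(1 / (n : ℝ))) * Real.logb 2 (seqProb q zn) - shannonEntropy q),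
      seqProb q zn
      ≤ Real.exp ((n : ℝ) * (Real.log (∑ w ∈ Finset.univ.filter (fun w => 0 < q w), q w ^ (1 - s / Real.log 2))
          - s * (shannonEntropy q + ε))) := by
  set H := shannonEntropy q with hH
  have hl2 : (0:ℝ) < Real.log 2 := Real.log_pos (by norm_num)
  set t := s / Real.log 2 with ht
  have htpos : 0 < t := div_pos hs hl2
  have hn' : (0:ℝ) < n := by exact_mod_cast hn
  set g : W → ℝ := fun w => if 0 < q w then q w ^ (1 - t) else 0 with hg
  set M := ∑ w ∈ Finset.univ.filter (fun w => 0 < q w), q w ^ (1 - t) with hM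
  have hMg : M = ∑ w, g w := by rw [hM, hg, Finset.sum_filter]
  have hMpos : 0 < M := by
    obtain ⟨w0, hw0⟩ : ∃ w, 0 < q w := by
      by_contra h; push_neg at h
      have : ∑ w, q w ≤ 0 := Finset.sum_nonpos fun w _ => h w
      linarith [hq1 ▸ this]
    refine Finset.sum_pos (fun w hw => ?_) ⟨w0, by simp [hw0]⟩
    exact Real.rpow_pos_of_pos (Finset.mem_filter.mp hw).2 _
  have key : ∀ zn : Fin n → W,
      (ε < (-(1 / (n : ℝ))) * Real.logb 2 (seqProb q zn) - H) →
      seqProb q zn ≤ Real.exp (-(s * (n : ℝ) * (H + ε))) * ∏ i, g (zn i) := by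
    intro zn hzn
    by_cases hpos : ∀ i, 0 < q (zn i)
    · have hP : 0 < seqProb q zn := Finset.prod_pos fun i _ => hpos i
      have hlogb : Real.logb 2 (seqProb q zn) = Real.log (seqProb q zn) / Real.log 2 := rfl
      have hL : Real.log (seqProb q zn) < -((n:ℝ) * (H + ε) * Real.log 2) := by
        rw [hlogb] at hzn
        have h1 : ε + H < -Real.log (seqProb q zn) / ((n:ℝ) * Real.log 2) := by
          have heq : (-(1 / (n : ℝ))) * (Real.log (seqProb q zn) / Real.log 2)
              = -Real.log (seqProb q zn) / ((n:ℝ) * Real.log 2) := by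
            field_simp
          linarith [hzn, heq ▸ hzn]
        have h2 := (lt_div_iff₀ (by positivity : (0:ℝ) < (n:ℝ) * Real.log 2)).mp h1
        nlinarith
      have hPt : seqProb q zn ^ t ≤ Real.exp (-(s * (n:ℝ) * (H + ε))) := by
        rw [← Real.exp_log hP, ← Real.exp_mul]
        apply Real.exp_le_exp.mpr
        have hts : t * Real.log 2 = s := by rw [ht]; exact div_mul_cancel₀ s hl2.ne'
        calc Real.log (seqProb q zn) * t
            ≤ -((n:ℝ) * (H + ε) * Real.log 2) * t := (mul_lt_mul_of_pos_right hL htpos).le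
          _ = -(s * (n:ℝ) * (H + ε)) := by rw [← hts]; ring
      have hsplit : seqProb q zn = seqProb q zn ^ (1 - t) * seqProb q zn ^ t := by
        rw [← Real.rpow_add hP]; norm_num
      have hprod : ∏ i, g (zn i) = seqProb q zn ^ (1 - t) := by
        rw [hg]
        have : ∏ i, (if 0 < q (zn i) then q (zn i) ^ (1 - t) else 0)
            = ∏ i, q (zn i) ^ (1 - t) := Finset.prod_congr rfl fun i _ => by simp [hpos i]
        rw [this]
        show ∏ i, q (zn i) ^ (1 - t) = (∏ i, q (zn i)) ^ (1 - t)
        exact Real.finset_prod_rpow _ _ (fun i _ => (hpos i).le) _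
      rw [hsplit, hprod, mul_comm (seqProb q zn ^ (1 - t)) (seqProb q zn ^ t)]
      exact mul_le_mul_of_nonneg_right hPt (Real.rpow_nonneg hP.le _)
    · push_neg at hpos
      obtain ⟨i0, hi0⟩ := hpos
      have hq0 : q (zn i0) = 0 := le_antisymm hi0 (hq _)
      have h1 : seqProb q zn = 0 := Finset.prod_eq_zero (Finset.mem_univ i0) hq0
      have h2 : ∏ i, g (zn i) = 0 := Finset.prod_eq_zero (Finset.mem_univ i0) (by simp [hg, hq0])
      rw [h1, h2, mul_zero]
  calc ∑ zn ∈ Finset.univ.filter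
        (fun zn : Fin n → W => ε < (-(1 / (n : ℝ))) * Real.logb 2 (seqProb q zn) - H),
      seqProb q zn
      ≤ ∑ zn ∈ Finset.univ.filter
        (fun zn : Fin n → W => ε < (-(1 / (n : ℝ))) * Real.logb 2 (seqProb q zn) - H),
        Real.exp (-(s * (n : ℝ) * (H + ε))) * ∏ i, g (zn i) :=
        Finset.sum_le_sum fun zn hzn => key zn (Finset.mem_filter.mp hzn).2
    _ ≤ ∑ zn : Fin n → W, Real.exp (-(s * (n : ℝ) * (H + ε))) * ∏ i, g (zn i) := by
        apply Finset.sum_le_sum_of_subset_of_nonneg (Finset.filter_subset _ _)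
        intro zn _ _
        refine mul_nonneg (Real.exp_nonneg _) (Finset.prod_nonneg fun i _ => ?_)
        by_cases h : 0 < q (zn i)
        · simp only [hg, if_pos h]; exact (Real.rpow_pos_of_pos h _).le
        · simp [hg, h]
    _ = Real.exp (-(s * (n : ℝ) * (H + ε))) * M ^ n := by
        rw [← Finset.mul_sum, aux_sum_prod, hMg]
    _ = Real.exp ((n : ℝ) * (Real.log M - s * (H + ε))) := by
        rw [← Real.exp_log (pow_pos hMpos n), ← Real.exp_add]
        congr 1
        rw [Real.log_pow]
        ring

lemma tail2_core {W : Type*} [Fintype W] (q : W → ℝ) (hq : ∀ w, 0 ≤ q w)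
    (hq1 : ∑ w, q w = 1) (n : ℕ) (hn : 0 < n) (ε : ℝ) (s : ℝ) (hs : 0 < s) :
    ∑ zn ∈ Finset.univ.filter
        (fun zn : Fin n → W => ε < -((-(1 / (n : ℝ))) * Real.logb 2 (seqProb q zn) - shannonEntropy q)),
      seqProb q zn
      ≤ Real.exp ((n : ℝ) * (Real.log (∑ w ∈ Finset.univ.filter (fun w => 0 < q w), q w ^ (1 + s / Real.log 2))
          - s * (-shannonEntropy q + ε))) := by
  set H := shannonEntropy q with hH
  have hl2 : (0:ℝ) < Real.log 2 := Real.log_pos (by norm_num)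
  set t := s / Real.log 2 with ht
  have htpos : 0 < t := div_pos hs hl2
  have hn' : (0:ℝ) < n := by exact_mod_cast hn
  set g : W → ℝ := fun w => if 0 < q w then q w ^ (1 + t) else 0 with hg
  set M := ∑ w ∈ Finset.univ.filter (fun w => 0 < q w), q w ^ (1 + t) with hM
  have hMg : M = ∑ w, g w := by rw [hM, hg, Finset.sum_filter]
  have hMpos : 0 < M := by
    obtain ⟨w0, hw0⟩ : ∃ w, 0 < q w := by
      by_contra h; push_neg at h
      have : ∑ w, q w ≤ 0 := Finset.sum_nonpos fun w _ => h w
      linarith [hq1 ▸ this]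
    refine Finset.sum_pos (fun w hw => ?_) ⟨w0, by simp [hw0]⟩
    exact Real.rpow_pos_of_pos (Finset.mem_filter.mp hw).2 _
  have key : ∀ zn : Fin n → W,
      (ε < -((-(1 / (n : ℝ))) * Real.logb 2 (seqProb q zn) - H)) →
      seqProb q zn ≤ Real.exp (-(s * (n : ℝ) * (-H + ε))) * ∏ i, g (zn i) := by
    intro zn hzn
    by_cases hpos : ∀ i, 0 < q (zn i)
    · have hP : 0 < seqProb q zn := Finset.prod_pos fun i _ => hpos i
      have hlogb : Real.logb 2 (seqProb q zn) = Real.log (seqProb q zn) / Real.log 2 := rfl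
      have hL : (n:ℝ) * (-H + ε) * Real.log 2 < Real.log (seqProb q zn) := by
        rw [hlogb] at hzn
        have heq : -((-(1 / (n : ℝ))) * (Real.log (seqProb q zn) / Real.log 2) - H)
            = Real.log (seqProb q zn) / ((n:ℝ) * Real.log 2) + H := by field_simp; ring
        rw [heq] at hzn
        have h2 := (lt_div_iff₀ (by positivity : (0:ℝ) < (n:ℝ) * Real.log 2)).mp
          (by linarith : ε - H < Real.log (seqProb q zn) / ((n:ℝ) * Real.log 2))
        nlinarith
      have hPt : Real.exp (s * (n:ℝ) * (-H + ε)) ≤ seqProb q zn ^ t := by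
        rw [← Real.exp_log hP, ← Real.exp_mul]
        apply Real.exp_le_exp.mpr
        have hts : t * Real.log 2 = s := by rw [ht]; exact div_mul_cancel₀ s hl2.ne'
        calc s * (n:ℝ) * (-H + ε) = (n:ℝ) * (-H + ε) * Real.log 2 * t := by rw [← hts]; ring
          _ ≤ Real.log (seqProb q zn) * t := (mul_lt_mul_of_pos_right hL htpos).le
      have hsplit : seqProb q zn ^ (1 + t) = seqProb q zn * seqProb q zn ^ t := by
        rw [Real.rpow_add hP, Real.rpow_one]
      have hprod : ∏ i, g (zn i) = seqProb q zn ^ (1 + t) := by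
        rw [hg]
        have : ∏ i, (if 0 < q (zn i) then q (zn i) ^ (1 + t) else 0)
            = ∏ i, q (zn i) ^ (1 + t) := Finset.prod_congr rfl fun i _ => by simp [hpos i]
        rw [this]
        show ∏ i, q (zn i) ^ (1 + t) = (∏ i, q (zn i)) ^ (1 + t)
        exact Real.finset_prod_rpow _ _ (fun i _ => (hpos i).le) _
      have hstep : seqProb q zn * Real.exp (s * (n:ℝ) * (-H + ε)) ≤ seqProb q zn ^ (1 + t) := by
        rw [hsplit]; exact mul_le_mul_of_nonneg_left hPt hP.le
      rw [hprod, Real.exp_neg, mul_comm, ← div_eq_mul_inv, le_div_iff₀ (Real.exp_pos _)]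
      exact hstep
    · push_neg at hpos
      obtain ⟨i0, hi0⟩ := hpos
      have hq0 : q (zn i0) = 0 := le_antisymm hi0 (hq _)
      have h1 : seqProb q zn = 0 := Finset.prod_eq_zero (Finset.mem_univ i0) hq0
      have h2 : ∏ i, g (zn i) = 0 := Finset.prod_eq_zero (Finset.mem_univ i0) (by simp [hg, hq0])
      rw [h1, h2, mul_zero]
  calc ∑ zn ∈ Finset.univ.filter
        (fun zn : Fin n → W => ε < -((-(1 / (n : ℝ))) * Real.logb 2 (seqProb q zn) - H)),
      seqProb q zn
      ≤ ∑ zn ∈ Finset.univ.filter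
        (fun zn : Fin n → W => ε < -((-(1 / (n : ℝ))) * Real.logb 2 (seqProb q zn) - H)),
        Real.exp (-(s * (n : ℝ) * (-H + ε))) * ∏ i, g (zn i) :=
        Finset.sum_le_sum fun zn hzn => key zn (Finset.mem_filter.mp hzn).2
    _ ≤ ∑ zn : Fin n → W, Real.exp (-(s * (n : ℝ) * (-H + ε))) * ∏ i, g (zn i) := by
        apply Finset.sum_le_sum_of_subset_of_nonneg (Finset.filter_subset _ _)
        intro zn _ _
        refine mul_nonneg (Real.exp_nonneg _) (Finset.prod_nonneg fun i _ => ?_)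
        by_cases h : 0 < q (zn i)
        · simp only [hg, if_pos h]; exact (Real.rpow_pos_of_pos h _).le
        · simp [hg, h]
    _ = Real.exp (-(s * (n : ℝ) * (-H + ε))) * M ^ n := by
        rw [← Finset.mul_sum, aux_sum_prod, hMg]
    _ = Real.exp ((n : ℝ) * (Real.log M - s * (-H + ε))) := by
        rw [← Real.exp_log (pow_pos hMpos n), ← Real.exp_add]
        congr 1
        rw [Real.log_pow]
        ring

lemma le_exp_sInf (n : ℕ) (P : ℝ) (hP1 : P ≤ 1) (S : Set ℝ) (hS : S.Nonempty)
    (h : ∀ y ∈ S, P ≤ Real.exp ((n:ℝ) * y)) : P ≤ Real.exp ((n:ℝ) * sInf S) := by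
  rcases Nat.eq_zero_or_pos n with hn | hn
  · simp [hn]; linarith
  by_cases hbdd : BddBelow S
  · by_cases hP : 0 < P
    · have hn' : (0:ℝ) < n := by exact_mod_cast hn
      have hlb : ∀ y ∈ S, Real.log P / (n:ℝ) ≤ y := by
        intro y hy
        have hlog := Real.log_le_log hP (h y hy)
        rw [Real.log_exp] at hlog
        rw [div_le_iff₀ hn']
        linarith
      have hinf := le_csInf hS hlb
      have h2 : Real.log P ≤ (n:ℝ) * sInf S := by
        have hm := mul_le_mul_of_nonneg_left hinf hn'.le
        rw [mul_div_cancel₀] at hm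
        · linarith
        · exact hn'.ne'
      calc P = Real.exp (Real.log P) := (Real.exp_log hP).symm
        _ ≤ _ := Real.exp_le_exp.mpr h2
    · exact le_trans (not_lt.mp hP) (Real.exp_pos _).le
  · rw [Real.sInf_of_not_bddBelow hbdd]
    simpa using hP1

set_option maxHeartbeats 1000000 in
lemma chernoff_bound {W : Type*} [Fintype W] (q : W → ℝ) (hq : ∀ w, 0 ≤ q w)
    (hq1 : ∑ w, q w = 1) (n : ℕ) (hn : 0 < n) (ε : ℝ) :
    ∑ zn ∈ Finset.univ.filter (fun zn : Fin n → W => ε < fdev q zn), seqProb q zn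
      ≤ Real.exp ((n:ℝ) * chernoff1 q ε) + Real.exp ((n:ℝ) * chernoff2 q ε) := by
  set c1 : (Fin n → W) → Prop :=
    fun zn => ε < (-(1 / (n : ℝ))) * Real.logb 2 (seqProb q zn) - shannonEntropy q with hc1
  set c2 : (Fin n → W) → Prop :=
    fun zn => ε < -((-(1 / (n : ℝ))) * Real.logb 2 (seqProb q zn) - shannonEntropy q) with hc2
  have hle : ∑ zn ∈ Finset.univ.filter (fun zn : Fin n → W => ε < fdev q zn), seqProb q zn
      ≤ ∑ zn ∈ Finset.univ.filter c1, seqProb q zn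
        + ∑ zn ∈ Finset.univ.filter c2, seqProb q zn := by
    apply sum_filter_split _ _ _ _ (seqProb_nonneg q hq)
    intro zn hzn
    exact lt_abs.mp hzn
  have hb1 : ∑ zn ∈ Finset.univ.filter c1, seqProb q zn ≤ Real.exp ((n:ℝ) * chernoff1 q ε) := by
    apply le_exp_sInf
    · calc ∑ zn ∈ Finset.univ.filter c1, seqProb q zn
          ≤ ∑ zn : Fin n → W, seqProb q zn :=
            Finset.sum_le_sum_of_subset_of_nonneg (Finset.filter_subset _ _)
              (fun zn _ _ => seqProb_nonneg q hq zn)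
        _ = 1 := sum_seqProb q hq1 n
    · exact ⟨_, Set.mem_image_of_mem _ (Set.mem_Ioi.mpr one_pos)⟩
    · rintro y ⟨s, hs, rfl⟩
      exact tail1_core q hq hq1 n hn ε s hs
  have hb2 : ∑ zn ∈ Finset.univ.filter c2, seqProb q zn ≤ Real.exp ((n:ℝ) * chernoff2 q ε) := by
    apply le_exp_sInf
    · calc ∑ zn ∈ Finset.univ.filter c2, seqProb q zn
          ≤ ∑ zn : Fin n → W, seqProb q zn :=
            Finset.sum_le_sum_of_subset_of_nonneg (Finset.filter_subset _ _)
              (fun zn _ _ => seqProb_nonneg q hq zn)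
        _ = 1 := sum_seqProb q hq1 n
    · exact ⟨_, Set.mem_image_of_mem _ (Set.mem_Ioi.mpr one_pos)⟩
    · rintro y ⟨s, hs, rfl⟩
      exact tail2_core q hq hq1 n hn ε s hs
  linarith

lemma jointSeqProb_nonneg {Z X : Type*} (p : Z × X → ℝ) (hp : ∀ zx, 0 ≤ p zx) {n : ℕ}
    (w : (Fin n → Z) × (Fin n → X)) : 0 ≤ jointSeqProb p w :=
  Finset.prod_nonneg fun i _ => hp _

lemma marg_seq {Z X : Type*} [Fintype Z] [Fintype X] (p : Z × X → ℝ) {n : ℕ}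
    (zn : Fin n → Z) :
    ∑ xn : Fin n → X, jointSeqProb p (zn, xn) = seqProb (margFst p) zn := by
  unfold jointSeqProb seqProb margFst
  symm
  rw [Finset.prod_univ_sum]
  simp

lemma sum_margFst {Z X : Type*} [Fintype Z] [Fintype X] (p : Z × X → ℝ)
    (hsum : ∑ zx, p zx = 1) : ∑ z, margFst p z = 1 := by
  unfold margFst
  rw [← Fintype.sum_prod_type]
  exact hsum

lemma margFst_nonneg {Z X : Type*} [Fintype Z] [Fintype X] (p : Z × X → ℝ)
    (hp : ∀ zx, 0 ≤ p zx) (z : Z) : 0 ≤ margFst p z :=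
  Finset.sum_nonneg fun x _ => hp _

lemma sum_fst_marg {Z X : Type*} [Fintype Z] [Fintype X] (p : Z × X → ℝ) {n : ℕ}
    (c : (Fin n → Z) → Prop) [DecidablePred c]
    [DecidablePred (fun w : (Fin n → Z) × (Fin n → X) => c w.1)] :
    ∑ w ∈ Finset.univ.filter (fun w : (Fin n → Z) × (Fin n → X) => c w.1), jointSeqProb p w
      = ∑ zn ∈ Finset.univ.filter c, seqProb (margFst p) zn := by
  rw [Finset.sum_filter, Finset.sum_filter, Fintype.sum_prod_type]
  refine Finset.sum_congr rfl fun zn _ => ?_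
  by_cases h : c zn
  · simp only [h, if_true]
    exact marg_seq p zn
  · simp [h]

lemma sum_pairs_eq {Z X : Type*} [Fintype Z] [Fintype X] (p : Z × X → ℝ) {n : ℕ}
    (c : (Fin n → Z) × (Fin n → X) → Prop) [DecidablePred c]
    [∀ zn : Fin n → Z, DecidablePred (fun xn : Fin n → X => c (zn, xn))] :
    ∑ w ∈ Finset.univ.filter c, jointSeqProb p w
      = ∑ zn : Fin n → Z, ∑ xn ∈ Finset.univ.filter (fun xn => c (zn, xn)),
          jointSeqProb p (zn, xn) := by
  rw [Finset.sum_filter, Fintype.sum_prod_type]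
  exact Finset.sum_congr rfl fun zn _ => by rw [Finset.sum_filter]

end AuxLemmas

set_option maxHeartbeats 1000000 in
/-- With `Θ = 𝟙{ (Zⁿ,Xⁿ) ∈ 𝒜_{ε,ε'}^{(n)}(Z,X) and Zⁿ ∈ ℬ_{ε,ε'}^{(n)}(Z,X) }`
(`ℬ` being the set of `zⁿ` with `ℙ[ (Zⁿ,Xⁿ) ∉ 𝒜 | Zⁿ = zⁿ ] ≤ 2^{−n b₀ ε}`), if
`ℙ[ f(Xⁿ) > ε' or f(Zⁿ,Xⁿ) > ε' ] ≤ 2^{−n b₁ ε}`, then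
`ℙ[Θ = 1] ≥ 1 − ( e^{n C_Z^{(1)}(ε)} + e^{n C_Z^{(2)}(ε)} + 2^{−n b₁ ε} + 2^{−n(b₁−b₀)ε} )`. -/
theorem prob_theta_one_bound
    {Z X : Type*} [Fintype Z] [Fintype X] (p : Z × X → ℝ)
    (hp : ∀ zx, 0 ≤ p zx) (hsum : ∑ zx, p zx = 1)
    (n : ℕ) (ε ε' b₀ b₁ : ℝ) (hε : 0 < ε) (hε' : 0 < ε') (hb₀ : 0 < b₀) (hb₁ : b₀ < b₁)
    (hhyp : ∑ w ∈ Finset.univ.filter (fun w : (Fin n → Z) × (Fin n → X) =>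
          fdev (margSnd p) w.2 > ε' ∨ fdev p (pairSeq w) > ε'),
        jointSeqProb p w ≤ (2 : ℝ) ^ (-((n : ℝ) * b₁ * ε))) :
    ∑ w ∈ Finset.univ.filter (fun w : (Fin n → Z) × (Fin n → X) =>
          typical p ε ε' w ∧
            condNotTyp p ε ε' w.1 ≤ (2 : ℝ) ^ (-((n : ℝ) * b₀ * ε))),
        jointSeqProb p w
      ≥ 1 - (Real.exp ((n : ℝ) * chernoff1 (margFst p) ε)
              + Real.exp ((n : ℝ) * chernoff2 (margFst p) ε)
              + (2 : ℝ) ^ (-((n : ℝ) * b₁ * ε))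
              + (2 : ℝ) ^ (-((n : ℝ) * (b₁ - b₀) * ε))) := by
  classical
  set qZ := margFst p with hqZ
  have hqZ0 : ∀ z, 0 ≤ qZ z := margFst_nonneg p hp
  have hqZ1 : ∑ z, qZ z = 1 := sum_margFst p hsum
  have hF0 : ∀ w : (Fin n → Z) × (Fin n → X), 0 ≤ jointSeqProb p w :=
    jointSeqProb_nonneg p hp
  rcases Nat.eq_zero_or_pos n with hn | hn
  · subst hn
    have hnn : 0 ≤ ∑ w ∈ Finset.univ.filter (fun w : (Fin 0 → Z) × (Fin 0 → X) =>
          typical p ε ε' w ∧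
            condNotTyp p ε ε' w.1 ≤ (2 : ℝ) ^ (-(((0:ℕ):ℝ) * b₀ * ε))),
        jointSeqProb p w := Finset.sum_nonneg fun w _ => hF0 w
    have e1 : Real.exp (((0:ℕ):ℝ) * chernoff1 qZ ε) = 1 := by norm_num
    have e2 : Real.exp (((0:ℕ):ℝ) * chernoff2 qZ ε) = 1 := by norm_num
    have e3 : (2:ℝ) ^ (-(((0:ℕ):ℝ) * b₁ * ε)) = 1 := by norm_num
    have e4 : (2:ℝ) ^ (-(((0:ℕ):ℝ) * (b₁ - b₀) * ε)) = 1 := by norm_num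
    rw [e1, e2, e3, e4]
    linarith
  -- main case n > 0
  set thr0 := (2 : ℝ) ^ (-((n : ℝ) * b₀ * ε)) with hthr0
  have hthr0pos : 0 < thr0 := Real.rpow_pos_of_pos two_pos _
  have htotal : ∑ w : (Fin n → Z) × (Fin n → X), jointSeqProb p w = 1 := by
    rw [Fintype.sum_prod_type]
    have hmg : ∀ zn : Fin n → Z, ∑ xn : Fin n → X, jointSeqProb p (zn, xn) = seqProb qZ zn :=
      fun zn => marg_seq p zn
    rw [Finset.sum_congr rfl fun zn _ => hmg zn]
    exact sum_seqProb qZ hqZ1 n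
  have hpartition := Finset.sum_filter_add_sum_filter_not Finset.univ
    (fun w : (Fin n → Z) × (Fin n → X) => typical p ε ε' w ∧ condNotTyp p ε ε' w.1 ≤ thr0) (jointSeqProb p)
  have himp : ∀ w : (Fin n → Z) × (Fin n → X),
      ¬ (typical p ε ε' w ∧ condNotTyp p ε ε' w.1 ≤ thr0) →
      (ε < fdev qZ w.1) ∨
        ((fdev (margSnd p) w.2 > ε' ∨ fdev p (pairSeq w) > ε') ∨
          (fdev qZ w.1 ≤ ε ∧ thr0 < condNotTyp p ε ε' w.1)) := by
    intro w hw
    by_cases h1 : ε < fdev qZ w.1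
    · exact Or.inl h1
    by_cases h2 : fdev (margSnd p) w.2 > ε' ∨ fdev p (pairSeq w) > ε'
    · exact Or.inr (Or.inl h2)
    right; right
    push_neg at h1
    push_neg at h2
    refine ⟨h1, ?_⟩
    by_contra hc
    push_neg at hc
    exact hw ⟨⟨h1, h2.1, h2.2⟩, hc⟩
  have hunion : ∑ w ∈ Finset.univ.filter (fun w : (Fin n → Z) × (Fin n → X) => ¬ (typical p ε ε' w ∧ condNotTyp p ε ε' w.1 ≤ thr0)), jointSeqProb p w
      ≤ (∑ w ∈ Finset.univ.filter (fun w : (Fin n → Z) × (Fin n → X) => ε < fdev qZ w.1), jointSeqProb p w)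
        + ((∑ w ∈ Finset.univ.filter (fun w : (Fin n → Z) × (Fin n → X) => fdev (margSnd p) w.2 > ε' ∨ fdev p (pairSeq w) > ε'), jointSeqProb p w)
          + (∑ w ∈ Finset.univ.filter (fun w : (Fin n → Z) × (Fin n → X) => fdev qZ w.1 ≤ ε ∧ thr0 < condNotTyp p ε ε' w.1), jointSeqProb p w)) := by
    have step1 := sum_filter_split (fun w : (Fin n → Z) × (Fin n → X) => ¬ (typical p ε ε' w ∧ condNotTyp p ε ε' w.1 ≤ thr0)) (fun w : (Fin n → Z) × (Fin n → X) => ε < fdev qZ w.1)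
      (fun w : (Fin n → Z) × (Fin n → X) =>
        (fdev (margSnd p) w.2 > ε' ∨ fdev p (pairSeq w) > ε') ∨
          (fdev qZ w.1 ≤ ε ∧ thr0 < condNotTyp p ε ε' w.1))
      (jointSeqProb p) hF0 himp
    have step2 := sum_filter_split
      (fun w : (Fin n → Z) × (Fin n → X) =>
        (fdev (margSnd p) w.2 > ε' ∨ fdev p (pairSeq w) > ε') ∨
          (fdev qZ w.1 ≤ ε ∧ thr0 < condNotTyp p ε ε' w.1))
      (fun w : (Fin n → Z) × (Fin n → X) => fdev (margSnd p) w.2 > ε' ∨ fdev p (pairSeq w) > ε') (fun w : (Fin n → Z) × (Fin n → X) => fdev qZ w.1 ≤ ε ∧ thr0 < condNotTyp p ε ε' w.1) (jointSeqProb p) hF0 (fun w hw => hw)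
    linarith
  have hbound1 : ∑ w ∈ Finset.univ.filter (fun w : (Fin n → Z) × (Fin n → X) => ε < fdev qZ w.1), jointSeqProb p w
      ≤ Real.exp ((n:ℝ) * chernoff1 qZ ε) + Real.exp ((n:ℝ) * chernoff2 qZ ε) := by
    have heq : ∑ w ∈ Finset.univ.filter (fun w : (Fin n → Z) × (Fin n → X) => ε < fdev qZ w.1), jointSeqProb p w
        = ∑ zn ∈ Finset.univ.filter (fun zn : Fin n → Z => ε < fdev qZ zn),
            seqProb qZ zn := sum_fst_marg p (fun zn : Fin n → Z => ε < fdev qZ zn)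
    rw [heq]
    exact chernoff_bound qZ hqZ0 hqZ1 n hn ε
  have hbound2 : ∑ w ∈ Finset.univ.filter (fun w : (Fin n → Z) × (Fin n → X) => fdev (margSnd p) w.2 > ε' ∨ fdev p (pairSeq w) > ε'), jointSeqProb p w
      ≤ (2 : ℝ) ^ (-((n : ℝ) * b₁ * ε)) := hhyp
  have hbound3 : ∑ w ∈ Finset.univ.filter (fun w : (Fin n → Z) × (Fin n → X) => fdev qZ w.1 ≤ ε ∧ thr0 < condNotTyp p ε ε' w.1), jointSeqProb p w
      ≤ (2 : ℝ) ^ (-((n : ℝ) * (b₁ - b₀) * ε)) := by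
    have hstep1 : ∑ w ∈ Finset.univ.filter (fun w : (Fin n → Z) × (Fin n → X) => fdev qZ w.1 ≤ ε ∧ thr0 < condNotTyp p ε ε' w.1), jointSeqProb p w
        = ∑ zn ∈ Finset.univ.filter
            (fun zn : Fin n → Z => fdev qZ zn ≤ ε ∧ thr0 < condNotTyp p ε ε' zn),
            seqProb qZ zn :=
          sum_fst_marg p (fun zn : Fin n → Z => fdev qZ zn ≤ ε ∧ thr0 < condNotTyp p ε ε' zn)
    set N' : (Fin n → Z) → ℝ := fun zn =>
      ∑ xn ∈ Finset.univ.filter (fun xn : Fin n → X =>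
          fdev (margSnd p) xn > ε' ∨ fdev p (pairSeq (zn, xn)) > ε'),
        jointSeqProb p (zn, xn) with hN'
    have hN'0 : ∀ zn, 0 ≤ N' zn := fun zn => Finset.sum_nonneg fun xn _ => hF0 _
    have hstep2 : ∀ zn ∈ Finset.univ.filter
        (fun zn : Fin n → Z => fdev qZ zn ≤ ε ∧ thr0 < condNotTyp p ε ε' zn),
        seqProb qZ zn ≤ (2 : ℝ) ^ ((n : ℝ) * b₀ * ε) * N' zn := by
      intro zn hzn
      obtain ⟨hfz, hcond⟩ := (Finset.mem_filter.mp hzn).2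
      set N : ℝ := ∑ xn ∈ Finset.univ.filter
          (fun xn : Fin n → X => ¬ typical p ε ε' (zn, xn)),
        jointSeqProb p (zn, xn) with hNdef
      have hcondeq : condNotTyp p ε ε' zn = N / seqProb qZ zn := rfl
      have hD0 : 0 ≤ seqProb qZ zn := seqProb_nonneg qZ hqZ0 zn
      have hDpos : 0 < seqProb qZ zn := by
        rcases hD0.lt_or_eq with h | h
        · exact h
        · exfalso
          rw [hcondeq, ← h, div_zero] at hcond
          linarith
      have hNge : thr0 * seqProb qZ zn < N := by
        rw [hcondeq, lt_div_iff₀ hDpos] at hcond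
        linarith
      have hNN' : N ≤ N' zn := by
        apply Finset.sum_le_sum_of_subset_of_nonneg
        · intro xn hxn
          rw [Finset.mem_filter] at hxn ⊢
          refine ⟨Finset.mem_univ _, ?_⟩
          have hxn2 := hxn.2
          unfold typical at hxn2
          push_neg at hxn2
          rcases lt_or_ge ε' (fdev (margSnd p) xn) with h | h
          · exact Or.inl h
          · exact Or.inr (hxn2 hfz h)
        · intro xn _ _; exact hF0 _
      have hlt : seqProb qZ zn < thr0⁻¹ * N := by
        rw [lt_inv_mul_iff₀ hthr0pos]
        linarith
      have hinv : thr0⁻¹ = (2 : ℝ) ^ ((n : ℝ) * b₀ * ε) := by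
        rw [hthr0, ← Real.rpow_neg two_pos.le, neg_neg]
      calc seqProb qZ zn ≤ thr0⁻¹ * N := hlt.le
        _ = (2 : ℝ) ^ ((n : ℝ) * b₀ * ε) * N := by rw [hinv]
        _ ≤ (2 : ℝ) ^ ((n : ℝ) * b₀ * ε) * N' zn := by
            apply mul_le_mul_of_nonneg_left hNN'
            exact (Real.rpow_pos_of_pos two_pos _).le
    have hstep3 : ∑ zn ∈ Finset.univ.filter
          (fun zn : Fin n → Z => fdev qZ zn ≤ ε ∧ thr0 < condNotTyp p ε ε' zn),
          seqProb qZ zn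
        ≤ (2 : ℝ) ^ ((n : ℝ) * b₀ * ε) * ∑ zn : Fin n → Z, N' zn := by
      calc ∑ zn ∈ Finset.univ.filter
            (fun zn : Fin n → Z => fdev qZ zn ≤ ε ∧ thr0 < condNotTyp p ε ε' zn),
            seqProb qZ zn
          ≤ ∑ zn ∈ Finset.univ.filter
            (fun zn : Fin n → Z => fdev qZ zn ≤ ε ∧ thr0 < condNotTyp p ε ε' zn),
              (2 : ℝ) ^ ((n : ℝ) * b₀ * ε) * N' zn := Finset.sum_le_sum hstep2
        _ ≤ ∑ zn : Fin n → Z, (2 : ℝ) ^ ((n : ℝ) * b₀ * ε) * N' zn := by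
            apply Finset.sum_le_sum_of_subset_of_nonneg (Finset.filter_subset _ _)
            intro zn _ _
            exact mul_nonneg (Real.rpow_pos_of_pos two_pos _).le (hN'0 zn)
        _ = (2 : ℝ) ^ ((n : ℝ) * b₀ * ε) * ∑ zn : Fin n → Z, N' zn := by
            rw [Finset.mul_sum]
    have hstep4 : ∑ zn : Fin n → Z, N' zn ≤ (2 : ℝ) ^ (-((n : ℝ) * b₁ * ε)) := by
      have heq := sum_pairs_eq p
        (fun w : (Fin n → Z) × (Fin n → X) => fdev (margSnd p) w.2 > ε' ∨ fdev p (pairSeq w) > ε')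
      refine le_trans (le_of_eq ?_) (le_trans (le_of_eq heq.symm) hhyp)
      simp only [hN']
    have hfinal : (2 : ℝ) ^ ((n : ℝ) * b₀ * ε) * (2 : ℝ) ^ (-((n : ℝ) * b₁ * ε))
        = (2 : ℝ) ^ (-((n : ℝ) * (b₁ - b₀) * ε)) := by
      rw [← Real.rpow_add two_pos]
      congr 1
      ring
    calc ∑ w ∈ Finset.univ.filter (fun w : (Fin n → Z) × (Fin n → X) => fdev qZ w.1 ≤ ε ∧ thr0 < condNotTyp p ε ε' w.1), jointSeqProb p w
        = ∑ zn ∈ Finset.univ.filter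
            (fun zn : Fin n → Z => fdev qZ zn ≤ ε ∧ thr0 < condNotTyp p ε ε' zn),
            seqProb qZ zn := hstep1
      _ ≤ (2 : ℝ) ^ ((n : ℝ) * b₀ * ε) * ∑ zn : Fin n → Z, N' zn := hstep3
      _ ≤ (2 : ℝ) ^ ((n : ℝ) * b₀ * ε) * (2 : ℝ) ^ (-((n : ℝ) * b₁ * ε)) := by
          apply mul_le_mul_of_nonneg_left hstep4
          exact (Real.rpow_pos_of_pos two_pos _).le
      _ = (2 : ℝ) ^ (-((n : ℝ) * (b₁ - b₀) * ε)) := hfinal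
  rw [htotal] at hpartition
  linarith
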